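/- arXiv:2204.10998 — 6 statements merged into one kernel-verified Lean document; each statement's English description precedes it below -/
import Mathlib

section
/- Let n ≥ 2 be an integer, let P be a finite nonempty set, let ε : P → {−1, +1} be a sign function, and for each p ∈ P let w_{p,1}, …, w_{p,n} be positive integers. Assume that the power series ∑_{p ∈ P} ε(p) · ∏_{i=1}^{n} g_{w_{p,i}} in ℚ⟦X⟧ is constant (i.e., equal to C·1 for some rational number C), and assume there is at least one p with ε(p) = +1 and at least one p with ε(p) = −1. Let W₊ be the multiset of all weights w_{p,i} over the points p with ε(p) = +1, and W₋ the multiset of all weights w_{p,i} over the points p with ε(p) = −1. Write the elements of W₊ in nondecreasing order as a₁ ≤ a₂ ≤ ⋯ and those of W₋ as b₁ ≤ b₂ ≤ ⋯. Then a₁ = b₁, a₂ = b₂, and the value a₂ occurs with the same multiplicity in W₊ as in W₋. -/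
/-- `g w = 1 + 2 ∑_{j ≥ 1} X^{jw}` in `ℚ⟦X⟧`: the coefficient of `X^0` is `1`,
and for `n ≥ 1` the coefficient of `X^n` is `2` if `w ∣ n` and `0` otherwise. -/
noncomputable def g (w : ℕ) : PowerSeries ℚ :=
  PowerSeries.mk fun n => if n = 0 then 1 else if w ∣ n then 2 else 0

lemma coeff_g (w k : ℕ) :
    PowerSeries.coeff k (g w) = if k = 0 then 1 else if w ∣ k then 2 else 0 := by
  simp [g]

lemma coeff_prod_g {n : ℕ} (v : Fin n → ℕ) (m : ℕ) (hm : 0 < m)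
    (hpair : ∀ i j, i ≠ j → m < v i + v j) :
    PowerSeries.coeff m (∏ i : Fin n, g (v i)) =
      2 * ((Finset.univ.filter fun i => v i ∣ m).card : ℚ) := by
  classical
  rw [PowerSeries.coeff_prod]
  have hBA : (Finset.univ.filter fun i => v i ∣ m).image (fun i => Finsupp.single i m)
      ⊆ Finset.finsuppAntidiag (Finset.univ : Finset (Fin n)) m := by
    intro l hl
    simp only [Finset.mem_image] at hl
    obtain ⟨i, hi, rfl⟩ := hl
    rw [Finset.mem_finsuppAntidiag]
    refine ⟨?_, Finset.subset_univ _⟩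
    have : ∀ j : Fin n, Finsupp.single i m j = if i = j then m else 0 := by
      intro j; rw [Finsupp.single_apply]
    rw [Finset.sum_congr rfl fun j _ => this j, Finset.sum_ite_eq]
    simp
  rw [← Finset.sum_subset hBA ?_]
  · rw [Finset.sum_image ?_]
    · rw [Finset.sum_congr rfl (fun i hi => ?_), Finset.sum_const, nsmul_eq_mul, mul_comm]
      have hdvd : v i ∣ m := (Finset.mem_filter.1 hi).2
      rw [Finset.prod_eq_single_of_mem i (Finset.mem_univ i) ?_]
      · rw [Finsupp.single_eq_same, coeff_g, if_neg hm.ne', if_pos hdvd]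
      · intro j _ hj
        rw [Finsupp.single_eq_of_ne' (Ne.symm hj), coeff_g, if_pos rfl]
    · intro i _ j _ hij
      exact Finsupp.single_left_injective hm.ne' hij
  · intro l hlA hlB
    by_contra hne
    have hfac : ∀ i, PowerSeries.coeff (l i) (g (v i)) ≠ 0 := by
      intro i hi0
      exact hne (Finset.prod_eq_zero (Finset.mem_univ i) hi0)
    rw [Finset.mem_finsuppAntidiag] at hlA
    have hsum : ∑ j, l j = m := hlA.1
    have hdv : ∀ i, l i ≠ 0 → v i ∣ l i := by
      intro i hi
      have h := hfac i
      rw [coeff_g, if_neg hi] at h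
      by_contra hnd
      rw [if_neg hnd] at h
      exact h rfl
    obtain ⟨i0, hi0⟩ : ∃ i, l i ≠ 0 := by
      by_contra h
      push_neg at h
      rw [Finset.sum_congr rfl fun j _ => h j, Finset.sum_const_zero] at hsum
      omega
    have huniq : ∀ j, j ≠ i0 → l j = 0 := by
      intro j hj
      by_contra hj0
      have h1 : v i0 ≤ l i0 := Nat.le_of_dvd (Nat.pos_of_ne_zero hi0) (hdv _ hi0)
      have h2 : v j ≤ l j := Nat.le_of_dvd (Nat.pos_of_ne_zero hj0) (hdv _ hj0)
      have h3 : l i0 + l j ≤ m := by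
        rw [← hsum]
        have hsub : ({i0, j} : Finset (Fin n)) ⊆ Finset.univ := Finset.subset_univ _
        calc l i0 + l j = ∑ k ∈ ({i0, j} : Finset (Fin n)), l k := by
              rw [Finset.sum_pair (Ne.symm hj)]
          _ ≤ ∑ j, l j := Finset.sum_le_sum_of_subset hsub
      have := hpair i0 j (Ne.symm hj)
      omega
    have hlim : l i0 = m := by
      rw [← hsum, Finset.sum_eq_single i0 (fun b _ hb => huniq b hb) (by simp)]
    apply hlB
    simp only [Finset.mem_image, Finset.mem_filter]
    refine ⟨i0, ⟨Finset.mem_univ _, ?_⟩, ?_⟩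
    · rw [← hlim]; exact hdv i0 hi0
    · ext j
      rcases eq_or_ne j i0 with rfl | hj
      · rw [Finsupp.single_eq_same, hlim]
      · rw [Finsupp.single_eq_of_ne' (Ne.symm hj), huniq j hj]

lemma key_div {n : ℕ} {P : Type*} [Fintype P] (ε : P → ℤ) (hε : ∀ p, ε p = 1 ∨ ε p = -1)
    (w : P → Fin n → ℕ) (C : ℚ)
    (hconst : ∑ p : P, (ε p : ℚ) • ∏ i : Fin n, g (w p i) = PowerSeries.C C)
    (m : ℕ) (hm : 0 < m) (hpair : ∀ p (i j : Fin n), i ≠ j → m < w p i + w p j) :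
    ∑ p ∈ Finset.univ.filter (fun p => ε p = 1), (Finset.univ.filter fun i => w p i ∣ m).card
      = ∑ p ∈ Finset.univ.filter (fun p => ε p = -1),
          (Finset.univ.filter fun i => w p i ∣ m).card := by
  classical
  have h := congrArg (PowerSeries.coeff m) hconst
  rw [map_sum, PowerSeries.coeff_C, if_neg hm.ne'] at h
  have hcoeff : ∀ p : P, PowerSeries.coeff m ((ε p : ℚ) • ∏ i : Fin n, g (w p i))
      = (ε p : ℚ) * (2 * ((Finset.univ.filter fun i => w p i ∣ m).card : ℚ)) := by
    intro p
    rw [LinearMap.map_smul, smul_eq_mul, coeff_prod_g (w p) m hm (hpair p)]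
  rw [Finset.sum_congr rfl (fun p _ => hcoeff p),
    ← Finset.sum_filter_add_sum_filter_not Finset.univ (fun p => ε p = 1)] at h
  have hfilter : Finset.univ.filter (fun p => ¬ ε p = 1)
      = Finset.univ.filter (fun p => ε p = -1) := by
    apply Finset.filter_congr
    intro p _
    rcases hε p with hp | hp <;> simp [hp]
  rw [hfilter] at h
  have h1 : ∑ p ∈ Finset.univ.filter (fun p => ε p = 1),
      (ε p : ℚ) * (2 * ((Finset.univ.filter fun i => w p i ∣ m).card : ℚ))
      = 2 * ∑ p ∈ Finset.univ.filter (fun p => ε p = 1),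
          ((Finset.univ.filter fun i => w p i ∣ m).card : ℚ) := by
    rw [Finset.mul_sum]
    refine Finset.sum_congr rfl fun p hp => ?_
    rw [(Finset.mem_filter.1 hp).2]
    push_cast
    ring
  have h2 : ∑ p ∈ Finset.univ.filter (fun p => ε p = -1),
      (ε p : ℚ) * (2 * ((Finset.univ.filter fun i => w p i ∣ m).card : ℚ))
      = -(2 * ∑ p ∈ Finset.univ.filter (fun p => ε p = -1),
          ((Finset.univ.filter fun i => w p i ∣ m).card : ℚ)) := by
    rw [Finset.mul_sum, ← Finset.sum_neg_distrib]
    refine Finset.sum_congr rfl fun p hp => ?_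
    rw [(Finset.mem_filter.1 hp).2]
    push_cast
    ring
  rw [h1, h2] at h
  have h3 : ∑ p ∈ Finset.univ.filter (fun p => ε p = 1),
      ((Finset.univ.filter fun i => w p i ∣ m).card : ℚ)
      = ∑ p ∈ Finset.univ.filter (fun p => ε p = -1),
          ((Finset.univ.filter fun i => w p i ∣ m).card : ℚ) := by linarith
  exact_mod_cast h3

lemma countP_finset_sum {α β : Type*} (s : Finset β) (f : β → Multiset α)
    (p : α → Prop) [DecidablePred p] :
    Multiset.countP p (∑ b ∈ s, f b) = ∑ b ∈ s, Multiset.countP p (f b) :=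
  map_sum (Multiset.countPAddMonoidHom p) f s

lemma countP_dvd_min (a : ℕ) (M : Multiset ℕ) (ha : 0 < a) (hM : ∀ z ∈ M, a ≤ z) :
    M.countP (· ∣ a) = M.count a := by
  rw [Multiset.count]
  apply Multiset.countP_congr rfl
  intro z hz
  simp only [eq_iff_iff]
  constructor
  · intro hdvd
    exact ((Nat.le_of_dvd ha hdvd).antisymm (hM z hz)).symm
  · rintro rfl
    exact dvd_refl _

lemma countP_dvd_eval (x c : ℕ) (T : Multiset ℕ) (hc : 0 < c) (hxc : x < c)
    (hT : ∀ z ∈ T, c ≤ z) :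
    (x ::ₘ T).countP (· ∣ c) = (if x ∣ c then 1 else 0) + (x ::ₘ T).count c := by
  rw [Multiset.countP_cons, Multiset.count_cons_of_ne (by omega : c ≠ x),
    countP_dvd_min c T hc hT]
  omega

lemma pair_sum (x y : ℕ) (T : Multiset ℕ) (hxy : x ≤ y) (hT : ∀ z ∈ T, y ≤ z)
    (z1 z2 : ℕ) (h : z1 ::ₘ {z2} ≤ x ::ₘ T) : x + y ≤ z1 + z2 := by
  have hz1 : z1 ∈ x ::ₘ T := Multiset.mem_of_le h (Multiset.mem_cons_self _ _)
  have hz2' : z2 ∈ (x ::ₘ T).erase z1 := by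
    have h2 := Multiset.erase_le_erase z1 h
    rw [Multiset.erase_cons_head] at h2
    exact Multiset.mem_of_le h2 (Multiset.mem_singleton_self _)
  rcases eq_or_ne z1 x with rfl | hne
  · rw [Multiset.erase_cons_head] at hz2'
    have := hT z2 hz2'
    omega
  · have hz1T : z1 ∈ T := by
      rcases Multiset.mem_cons.1 hz1 with h' | h'
      · exact absurd h' hne
      · exact h'
    have h1 := hT z1 hz1T
    have hz2 : z2 ∈ x ::ₘ T := Multiset.mem_of_le (Multiset.erase_le _ _) hz2'
    have h2 : x ≤ z2 := by
      rcases Multiset.mem_cons.1 hz2 with rfl | h'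
      · exact le_refl _
      · exact hxy.trans (hT z2 h')
    omega

theorem stmt_0 (n : ℕ) (hn : 2 ≤ n) (P : Type*) [Fintype P] [Nonempty P]
    (ε : P → ℤ) (hε : ∀ p, ε p = 1 ∨ ε p = -1)
    (w : P → Fin n → ℕ) (hw : ∀ p i, 0 < w p i)
    (C : ℚ)
    (hconst : ∑ p : P, (ε p : ℚ) • ∏ i : Fin n, g (w p i) = PowerSeries.C C)
    (hpos : ∃ p, ε p = 1) (hneg : ∃ p, ε p = -1)
    (Wpos Wneg : Multiset ℕ)
    (hWpos : Wpos =
      ∑ p ∈ Finset.univ.filter (fun p => ε p = 1), Finset.univ.val.map (w p))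
    (hWneg : Wneg =
      ∑ p ∈ Finset.univ.filter (fun p => ε p = -1), Finset.univ.val.map (w p)) :
    (Wpos.sort (· ≤ ·)).getD 0 0 = (Wneg.sort (· ≤ ·)).getD 0 0 ∧
    (Wpos.sort (· ≤ ·)).getD 1 0 = (Wneg.sort (· ≤ ·)).getD 1 0 ∧
    Wpos.count ((Wpos.sort (· ≤ ·)).getD 1 0) =
      Wneg.count ((Wpos.sort (· ≤ ·)).getD 1 0) := by
  classical
  -- translate countP over Wpos/Wneg into sums of filter-cards
  have htrans : ∀ (σ : ℤ) (W : Multiset ℕ),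
      W = ∑ p ∈ Finset.univ.filter (fun p => ε p = σ), Finset.univ.val.map (w p) →
      ∀ m : ℕ, Multiset.countP (· ∣ m) W
        = ∑ p ∈ Finset.univ.filter (fun p => ε p = σ),
            (Finset.univ.filter fun i => w p i ∣ m).card := by
    intro σ W hW m
    rw [hW, countP_finset_sum]
    refine Finset.sum_congr rfl fun p _ => ?_
    rw [Multiset.countP_map]
    rfl
  have hdiv : ∀ m : ℕ, 0 < m → (∀ p (i j : Fin n), i ≠ j → m < w p i + w p j) →
      Multiset.countP (· ∣ m) Wpos = Multiset.countP (· ∣ m) Wneg := by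
    intro m hm hQ
    rw [htrans 1 Wpos hWpos m, htrans (-1) Wneg hWneg m]
    exact key_div ε hε w C hconst m hm hQ
  -- submultiset facts
  have hle : ∀ p : P, ∀ σ : ℤ, ε p = σ →
      ∀ W, W = (∑ q ∈ Finset.univ.filter (fun q => ε q = σ), Finset.univ.val.map (w q)) →
      Finset.univ.val.map (w p) ≤ W := by
    intro p σ hp W hW
    rw [hW]
    exact Finset.single_le_sum (f := fun q => Finset.univ.val.map (w q))
      (fun q _ => Multiset.zero_le _) (Finset.mem_filter.2 ⟨Finset.mem_univ _, hp⟩)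
  have hle_pos : ∀ p, ε p = 1 → Finset.univ.val.map (w p) ≤ Wpos :=
    fun p hp => hle p 1 hp Wpos hWpos
  have hle_neg : ∀ p, ε p = -1 → Finset.univ.val.map (w p) ≤ Wneg :=
    fun p hp => hle p (-1) hp Wneg hWneg
  have hmem_pos : ∀ p, ε p = 1 → ∀ i, w p i ∈ Wpos := fun p hp i =>
    Multiset.mem_of_le (hle_pos p hp) (Multiset.mem_map_of_mem _ (Finset.mem_univ i))
  have hmem_neg : ∀ p, ε p = -1 → ∀ i, w p i ∈ Wneg := fun p hp i =>
    Multiset.mem_of_le (hle_neg p hp) (Multiset.mem_map_of_mem _ (Finset.mem_univ i))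
  have hpair_le : ∀ p (i j : Fin n), i ≠ j →
      (w p i) ::ₘ {w p j} ≤ Finset.univ.val.map (w p) := by
    intro p i j hij
    have h2 : j ∈ (Finset.univ.val : Multiset (Fin n)).erase i :=
      (Multiset.mem_erase_of_ne hij.symm).2 (Finset.mem_univ j)
    have h1 : (Finset.univ.val : Multiset (Fin n))
        = i ::ₘ j ::ₘ (((Finset.univ.val : Multiset (Fin n)).erase i).erase j) := by
      rw [Multiset.cons_erase h2, Multiset.cons_erase (Finset.mem_univ i : i ∈ Finset.univ)]
    rw [h1, Multiset.map_cons, Multiset.map_cons]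
    exact Multiset.cons_le_cons _ (Multiset.cons_le_cons _ (Multiset.zero_le _))
  -- cardinalities
  have hcard : ∀ p : P, (Finset.univ.val.map (w p)).card = n := by
    intro p; simp
  have hcard_pos : 2 ≤ Multiset.card Wpos := by
    obtain ⟨p0, hp0⟩ := hpos
    have := Multiset.card_le_card (hle_pos p0 hp0)
    rw [hcard p0] at this
    omega
  have hcard_neg : 2 ≤ Multiset.card Wneg := by
    obtain ⟨p0, hp0⟩ := hneg
    have := Multiset.card_le_card (hle_neg p0 hp0)
    rw [hcard p0] at this
    omega
  -- destructure sorted lists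
  obtain ⟨x, y, xs, hlp⟩ : ∃ x y xs, Wpos.sort (· ≤ ·) = x :: y :: xs := by
    have hlen : 2 ≤ (Wpos.sort (· ≤ ·)).length := by
      rw [Multiset.length_sort]; exact hcard_pos
    match h : Wpos.sort (· ≤ ·) with
    | [] => rw [h] at hlen; simp at hlen
    | [x] => rw [h] at hlen; simp at hlen
    | x :: y :: xs => exact ⟨x, y, xs, rfl⟩
  obtain ⟨b1, b2, ys, hln⟩ : ∃ b1 b2 ys, Wneg.sort (· ≤ ·) = b1 :: b2 :: ys := by
    have hlen : 2 ≤ (Wneg.sort (· ≤ ·)).length := by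
      rw [Multiset.length_sort]; exact hcard_neg
    match h : Wneg.sort (· ≤ ·) with
    | [] => rw [h] at hlen; simp at hlen
    | [x] => rw [h] at hlen; simp at hlen
    | x :: y :: xs => exact ⟨x, y, xs, rfl⟩
  have hWx : Wpos = x ::ₘ y ::ₘ (↑xs : Multiset ℕ) := by
    rw [← Multiset.sort_eq Wpos (· ≤ ·), hlp]; rfl
  have hWb : Wneg = b1 ::ₘ b2 ::ₘ (↑ys : Multiset ℕ) := by
    rw [← Multiset.sort_eq Wneg (· ≤ ·), hln]; rfl
  have hsp := Multiset.pairwise_sort Wpos (· ≤ ·)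
  rw [hlp, List.pairwise_cons, List.pairwise_cons] at hsp
  have hsn := Multiset.pairwise_sort Wneg (· ≤ ·)
  rw [hln, List.pairwise_cons, List.pairwise_cons] at hsn
  have hxy : x ≤ y := hsp.1 y (List.mem_cons_self)
  have hb12 : b1 ≤ b2 := hsn.1 b2 (List.mem_cons_self)
  have hy_min : ∀ z ∈ (y ::ₘ (↑xs : Multiset ℕ)), y ≤ z := by
    intro z hz
    rcases Multiset.mem_cons.1 hz with rfl | hz'
    · exact le_refl _
    · exact hsp.2.1 z (by exact_mod_cast hz')
  have hb2_min : ∀ z ∈ (b2 ::ₘ (↑ys : Multiset ℕ)), b2 ≤ z := by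
    intro z hz
    rcases Multiset.mem_cons.1 hz with rfl | hz'
    · exact le_refl _
    · exact hsn.2.1 z (by exact_mod_cast hz')
  have hx_min : ∀ z ∈ Wpos, x ≤ z := by
    intro z hz
    rw [hWx] at hz
    rcases Multiset.mem_cons.1 hz with rfl | hz'
    · exact le_refl _
    · exact hxy.trans (hy_min z hz')
  have hb1_min : ∀ z ∈ Wneg, b1 ≤ z := by
    intro z hz
    rw [hWb] at hz
    rcases Multiset.mem_cons.1 hz with rfl | hz'
    · exact le_refl _
    · exact hb12.trans (hb2_min z hz')
  have hxWpos : x ∈ Wpos := by rw [hWx]; exact Multiset.mem_cons_self _ _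
  have hyWpos : y ∈ Wpos := by rw [hWx]; exact Multiset.mem_cons.2 (Or.inr (Multiset.mem_cons_self _ _))
  have hb1Wneg : b1 ∈ Wneg := by rw [hWb]; exact Multiset.mem_cons_self _ _
  have hb2Wneg : b2 ∈ Wneg := by rw [hWb]; exact Multiset.mem_cons.2 (Or.inr (Multiset.mem_cons_self _ _))
  have hxpos : 0 < x := by
    rw [hWpos] at hxWpos
    obtain ⟨p, _, hp⟩ := Multiset.mem_sum.1 hxWpos
    obtain ⟨i, _, hi⟩ := Multiset.mem_map.1 hp
    rw [← hi]; exact hw p i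
  have hb1pos : 0 < b1 := by
    rw [hWneg] at hb1Wneg
    obtain ⟨p, _, hp⟩ := Multiset.mem_sum.1 hb1Wneg
    obtain ⟨i, _, hi⟩ := Multiset.mem_map.1 hp
    rw [← hi]; exact hw p i
  -- Step I : m = min x b1
  have hQa : ∀ p (i j : Fin n), i ≠ j → min x b1 < w p i + w p j := by
    intro p i j hij
    have h1 : 0 < w p i := hw p i
    have h2 : min x b1 ≤ w p j := by
      rcases hε p with hp | hp
      · exact le_trans (min_le_left _ _) (hx_min _ (hmem_pos p hp j))
      · exact le_trans (min_le_right _ _) (hb1_min _ (hmem_neg p hp j))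
    omega
  have hI := hdiv (min x b1) (by omega) hQa
  rw [countP_dvd_min _ Wpos (by omega) (fun z hz => le_trans (min_le_left _ _) (hx_min z hz)),
    countP_dvd_min _ Wneg (by omega) (fun z hz => le_trans (min_le_right _ _) (hb1_min z hz))] at hI
  have hxb1 : x = b1 := by
    rcases le_total x b1 with h | h
    · rw [min_eq_left h] at hI
      have hxN : x ∈ Wneg := by
        rw [← Multiset.count_pos, ← hI, Multiset.count_pos]
        exact hxWpos
      exact le_antisymm h (hb1_min x hxN)
    · rw [min_eq_right h] at hI
      have hbP : b1 ∈ Wpos := by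
        rw [← Multiset.count_pos, hI, Multiset.count_pos]
        exact hb1Wneg
      exact le_antisymm (hx_min b1 hbP) h
  subst hxb1
  rw [min_self] at hI
  -- goal rewriting
  rw [hlp, hln]
  simp only [List.getD_cons_zero, List.getD_cons_succ]
  refine ⟨by simp, ?_⟩
  -- Step II
  rcases eq_or_lt_of_le hxy with rfl | hxlty
  · -- y = x : count x Wpos ≥ 2
    have hc2 : 2 ≤ Wpos.count x := by
      rw [hWx]
      rw [Multiset.count_cons_self, Multiset.count_cons_self]
      omega
    rw [hI] at hc2
    have : x ∈ b2 ::ₘ (↑ys : Multiset ℕ) := by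
      rw [← Multiset.count_pos]
      rw [hWb, Multiset.count_cons_self] at hc2
      omega
    have hb2x : b2 = x := le_antisymm (hb2_min x this) hb12
    exact ⟨hb2x.symm, hI⟩
  · rcases eq_or_lt_of_le hb12 with hb2x | hxltb2
    · -- b2 = x : impossible since then count x Wpos ≥ 2 but y > x
      exfalso
      have hc2 : 2 ≤ Wneg.count x := by
        rw [hWb, ← hb2x, Multiset.count_cons_self, Multiset.count_cons_self]
        omega
      rw [← hI] at hc2
      rw [hWx, Multiset.count_cons_self] at hc2
      have : x ∈ y ::ₘ (↑xs : Multiset ℕ) := by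
        rw [← Multiset.count_pos]; omega
      have := hy_min x this
      omega
    · -- x < y and x < b2
      set c := min y b2 with hc
      have hxltc : x < c := lt_min hxlty hxltb2
      have hcy : c ≤ y := min_le_left _ _
      have hcb2 : c ≤ b2 := min_le_right _ _
      have hQc : ∀ p (i j : Fin n), i ≠ j → c < w p i + w p j := by
        intro p i j hij
        have hp2 := hpair_le p i j hij
        rcases hε p with hp | hp
        · have hle2 : (w p i) ::ₘ {w p j} ≤ x ::ₘ (y ::ₘ (↑xs : Multiset ℕ)) := by
            rw [← hWx]; exact le_trans hp2 (hle_pos p hp)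
          have := pair_sum x y (y ::ₘ (↑xs : Multiset ℕ)) hxy hy_min _ _ hle2
          omega
        · have hle2 : (w p i) ::ₘ {w p j} ≤ x ::ₘ (b2 ::ₘ (↑ys : Multiset ℕ)) := by
            rw [← hWb]; exact le_trans hp2 (hle_neg p hp)
          have := pair_sum x b2 (b2 ::ₘ (↑ys : Multiset ℕ)) hb12 hb2_min _ _ hle2
          omega
      have hII := hdiv c (by omega) hQc
      rw [hWx, hWb, countP_dvd_eval x c _ (by omega) hxltc
          (fun z hz => le_trans hcy (hy_min z hz)),
        countP_dvd_eval x c _ (by omega) hxltc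
          (fun z hz => le_trans hcb2 (hb2_min z hz))] at hII
      have hccount : (x ::ₘ y ::ₘ (↑xs : Multiset ℕ)).count c
          = (x ::ₘ b2 ::ₘ (↑ys : Multiset ℕ)).count c := Nat.add_left_cancel hII
      rw [← hWx, ← hWb] at hccount
      rcases le_total y b2 with h | h
      · have hcy' : c = y := min_eq_left h
        have hyN : y ∈ Wneg := by
          rw [← Multiset.count_pos, ← hcy', ← hccount, hcy', Multiset.count_pos]
          exact hyWpos
        have : y ∈ b2 ::ₘ (↑ys : Multiset ℕ) := by
          rw [hWb] at hyN
          rcases Multiset.mem_cons.1 hyN with h' | h'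
          · omega
          · exact h'
        have hyb2 : y = b2 := le_antisymm h (hb2_min y this)
        refine ⟨hyb2, ?_⟩
        rw [← hcy']; exact hccount
      · have hcb2' : c = b2 := min_eq_right h
        have hbP : b2 ∈ Wpos := by
          rw [← Multiset.count_pos, ← hcb2', hccount, hcb2', Multiset.count_pos]
          exact hb2Wneg
        have : b2 ∈ y ::ₘ (↑xs : Multiset ℕ) := by
          rw [hWx] at hbP
          rcases Multiset.mem_cons.1 hbP with h' | h'
          · omega
          · exact h'
        have hyb2 : y = b2 := le_antisymm (hy_min b2 this) h
        refine ⟨hyb2, ?_⟩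
        rw [hyb2, ← hcb2']
        exact hccount
end

section
/- Let a, b, c, d, e, f be positive integers. If g_a·g_b·g_c + g_d·g_e·g_f = g_a·g_b·g_d + g_c·g_e·g_f in ℚ⟦X⟧, then c = d or {a, b} = {e, f} as multisets. -/
lemma g_coeff (w n : ℕ) :
    PowerSeries.coeff n (g w) = if n = 0 then 1 else if w ∣ n then 2 else 0 := by
  simp [g]

lemma g_ne_zero (w : ℕ) : g w ≠ 0 := by
  intro h
  have := g_coeff w 0
  rw [h] at this
  simp at this

lemma g_inj {c d : ℕ} (hc : 0 < c) (hd : 0 < d) (h : g c = g d) : c = d := by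
  have h1 : PowerSeries.coeff c (g c) = PowerSeries.coeff c (g d) := by rw [h]
  have h2 : PowerSeries.coeff d (g c) = PowerSeries.coeff d (g d) := by rw [h]
  rw [g_coeff, g_coeff] at h1 h2
  simp only [hc.ne', hd.ne', if_false, dvd_refl, if_true] at h1 h2
  have hdc : d ∣ c := by
    by_contra hx
    rw [if_neg hx] at h1; norm_num at h1
  have hcd : c ∣ d := by
    by_contra hx
    rw [if_neg hx] at h2; norm_num at h2
  exact Nat.dvd_antisymm hcd hdc

lemma coeff_g_mul (a b m : ℕ) (hm : 0 < m) (hma : m ≤ a) (hmb : m ≤ b) :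
    PowerSeries.coeff m (g a * g b) =
      (if a ∣ m then 2 else 0) + (if b ∣ m then 2 else 0) := by
  rw [PowerSeries.coeff_mul, Finset.Nat.sum_antidiagonal_eq_sum_range_succ_mk]
  have key : ∀ k ∈ Finset.range (m + 1),
      PowerSeries.coeff k (g a) * PowerSeries.coeff (m - k) (g b) =
        (if k = 0 then (if b ∣ m then 2 else 0) else 0) +
        (if k = m then (if a ∣ m then 2 else 0) else 0) := by
    intro k hk
    rw [Finset.mem_range, Nat.lt_succ_iff] at hk
    rw [g_coeff, g_coeff]
    rcases eq_or_ne k 0 with rfl | hk0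
    · simp [hm.ne', hm.ne]
    · rcases eq_or_ne k m with rfl | hkm
      · simp [hm.ne', hk0]
      · have hka : ¬ a ∣ k := fun hdvd =>
          absurd (Nat.le_of_dvd (Nat.pos_of_ne_zero hk0) hdvd)
            (by omega)
        simp [hk0, hka, hkm]
  rw [Finset.sum_congr rfl key, Finset.sum_add_distrib,
    Finset.sum_ite_eq' (Finset.range (m + 1)) 0,
    Finset.sum_ite_eq' (Finset.range (m + 1)) m]
  simp [Nat.lt_succ_iff, add_comm]

lemma key_lemma {a b e f : ℕ} (ha : 0 < a) (hab : a ≤ b) (hae : a ≤ e) (haf : a ≤ f)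
    (h : g a * g b = g e * g f) : ({a, b} : Multiset ℕ) = {e, f} := by
  have hcoeff : PowerSeries.coeff a (g a * g b) = PowerSeries.coeff a (g e * g f) := by
    rw [h]
  rw [coeff_g_mul a b a ha le_rfl hab, coeff_g_mul e f a ha hae haf] at hcoeff
  have hba : (b ∣ a) ↔ b = a := ⟨fun hd => le_antisymm (Nat.le_of_dvd ha hd) hab,
    fun hh => hh ▸ dvd_refl a⟩
  have hea : (e ∣ a) ↔ e = a := ⟨fun hd => le_antisymm (Nat.le_of_dvd ha hd) hae,
    fun hh => hh ▸ dvd_refl a⟩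
  have hfa : (f ∣ a) ↔ f = a := ⟨fun hd => le_antisymm (Nat.le_of_dvd ha hd) haf,
    fun hh => hh ▸ dvd_refl a⟩
  simp only [dvd_refl, if_true, hba, hea, hfa] at hcoeff
  by_cases hb : b = a
  · -- LHS = 4, so e = a and f = a
    have heq : e = a ∧ f = a := by
      by_cases h1 : e = a <;> by_cases h2 : f = a <;>
        simp [hb, h1, h2] at hcoeff <;> try norm_num at hcoeff
      exact ⟨h1, h2⟩
    subst hb
    rw [heq.1, heq.2]
  · -- LHS = 2, exactly one of e = a, f = a
    by_cases h1 : e = a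
    · subst h1
      have hb2 : g b = g f := mul_left_cancel₀ (g_ne_zero e) h
      have : b = f := g_inj (lt_of_lt_of_le ha hab) (lt_of_lt_of_le ha haf) hb2
      rw [this]
    · by_cases h2 : f = a
      · subst h2
        have h' : g f * g b = g f * g e := by rw [h, mul_comm]
        have hb2 : g b = g e := mul_left_cancel₀ (g_ne_zero f) h'
        have : b = e := g_inj (lt_of_lt_of_le ha hab) (lt_of_lt_of_le ha hae) hb2
        rw [this]
        exact Multiset.pair_comm f e ▸ rfl
      · simp [hb, h1, h2] at hcoeff

theorem stmt_5 (a b c d e f : ℕ) (ha : 0 < a) (hb : 0 < b) (hc : 0 < c)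
    (hd : 0 < d) (he : 0 < e) (hf : 0 < f)
    (h : g a * g b * g c + g d * g e * g f = g a * g b * g d + g c * g e * g f) :
    c = d ∨ ({a, b} : Multiset ℕ) = {e, f} := by
  have hfac : (g c - g d) * (g a * g b - g e * g f) = 0 := by linear_combination h
  rcases mul_eq_zero.mp hfac with h1 | h2
  · left
    exact g_inj hc hd (sub_eq_zero.mp h1)
  · right
    have heq : g a * g b = g e * g f := sub_eq_zero.mp h2
    have h4 : (a ≤ b ∧ a ≤ e ∧ a ≤ f) ∨ (b ≤ a ∧ b ≤ e ∧ b ≤ f) ∨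
        (e ≤ a ∧ e ≤ b ∧ e ≤ f) ∨ (f ≤ a ∧ f ≤ b ∧ f ≤ e) := by omega
    rcases h4 with ⟨h1, h2, h3⟩ | ⟨h1, h2, h3⟩ | ⟨h1, h2, h3⟩ | ⟨h1, h2, h3⟩
    · exact key_lemma ha h1 h2 h3 heq
    · have := key_lemma hb h1 h2 h3 (by rw [mul_comm (g b) (g a)]; exact heq)
      rwa [Multiset.pair_comm b a] at this
    · exact (key_lemma he h3 h1 h2 heq.symm).symm
    · have := key_lemma hf h3 h1 h2 (by rw [mul_comm (g f) (g e)]; exact heq.symm)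
      rw [Multiset.pair_comm f e] at this
      exact this.symm
end

section
/- Let a, b, c, e be positive real numbers with a < b and c < b. If 1/(a·b·c) + 1/(a·(b−a)·e) − 1/(b·(b−a)·(b−c)) − 1/(c·e·(b−c)) = 0, then b = a + c or e = a − c. -/
theorem stmt_7 (a b c e : ℝ) (ha : 0 < a) (hb : 0 < b) (hc : 0 < c) (he : 0 < e)
    (hab : a < b) (hcb : c < b)
    (h : 1 / (a * b * c) + 1 / (a * (b - a) * e) - 1 / (b * (b - a) * (b - c))
      - 1 / (c * e * (b - c)) = 0) :
    b = a + c ∨ e = a - c := by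
  have hba : (0:ℝ) < b - a := by linarith
  have hbc : (0:ℝ) < b - c := by linarith
  have hK : a * b * c * e * (b - a) * (b - c) ≠ 0 := by positivity
  field_simp at h
  have key2 : (b - a - c) * (e - a + c) * b * (a * b * c * e * (b - a) * (b - c)) = 0 := by
    linear_combination (a * b * c * e * (b - a) * (b - c)) * h
  have key : (b - a - c) * (e - a + c) * b = 0 :=
    (mul_eq_zero.1 key2).resolve_right hK
  rcases mul_eq_zero.1 key with h1 | h1
  · rcases mul_eq_zero.1 h1 with h2 | h2
    · left; linarith
    · right; linarith
  · exact absurd h1 hb.ne'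
end

section
/- There do not exist positive integers a and d with a < d < 2a such that 1/(a·(2a−d)·(d−a)) + 1/(a·d·(2a−d)) = 1/((2d−a)·d·(2d−2a)) + 1/((d−a)·(2a−d)·(2d−2a)). -/
theorem stmt_9 :
    ¬ ∃ a d : ℕ, 0 < a ∧ a < d ∧ d < 2 * a ∧
      1 / ((a : ℚ) * (2 * a - d) * (d - a)) + 1 / ((a : ℚ) * d * (2 * a - d)) =
        1 / ((2 * (d : ℚ) - a) * d * (2 * d - 2 * a)) +
          1 / (((d : ℚ) - a) * (2 * a - d) * (2 * d - 2 * a)) := by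
  rintro ⟨a, d, ha, had, hd2a, heq⟩
  have hA : (0:ℚ) < a := by exact_mod_cast ha
  have hD : (0:ℚ) < d := by exact_mod_cast (ha.trans had)
  have hDA : (0:ℚ) < (d:ℚ) - a := by
    have : (a:ℚ) < d := by exact_mod_cast had
    linarith
  have h2AD : (0:ℚ) < 2 * a - (d:ℚ) := by
    have : (d:ℚ) < 2 * a := by exact_mod_cast hd2a
    linarith
  have h2DA : (0:ℚ) < 2 * (d:ℚ) - a := by linarith
  have h22 : (0:ℚ) < 2 * (d:ℚ) - 2 * a := by linarith
  have : (a:ℚ) * 2 - d ≠ 0 := by linarith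
  field_simp at heq
  have h2 : 2 * (a:ℚ) * d^2 * (2*a - d)^2 * (d - a)^2 *
      (8 * (d:ℚ)^2 - 17 * a * d + 8 * (a:ℚ)^2) = 0 := by linear_combination (2 * (a:ℚ) * d * (2*a - d)^2 * (d - a)^2) * heq
  have hc : 2 * (a:ℚ) * d^2 * (2*a - d)^2 * (d - a)^2 ≠ 0 := by positivity
  have key : 8 * (d:ℚ)^2 - 17 * a * d + 8 * (a:ℚ)^2 = 0 :=
    (mul_eq_zero.1 h2).resolve_left hc
  have hsq : IsSquare ((33:ℕ) : ℚ) := by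
    refine ⟨(16 * d - 17 * a) / a, ?_⟩
    field_simp
    push_cast
    nlinarith [key]
  rw [Rat.isSquare_natCast_iff] at hsq
  obtain ⟨r, hr⟩ := hsq
  have : r ≤ 5 := by nlinarith
  interval_cases r <;> omega
end

section
/- Let b, c, e, f be positive integers. If g_{c+e}·g_b·(g_c + g_e) = g_f·(g_b·g_b + g_c·g_e) in ℚ⟦X⟧, then f = c + e and moreover b = c or b = e. -/
open PowerSeries

theorem gu (w : ℕ) (hw : 0 < w) : g w * (1 - (X : ℚ⟦X⟧) ^ w) = 1 + X ^ w := by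
  ext n
  rw [mul_sub, mul_one]
  simp only [map_sub, map_add, PowerSeries.coeff_mul_X_pow', g, PowerSeries.coeff_mk,
    PowerSeries.coeff_one, PowerSeries.coeff_X_pow]
  have hdv : w ≤ n → n - w ≠ 0 → (w ∣ n ↔ w ∣ n - w) := by
    intro h1 _
    constructor
    · intro h; exact Nat.dvd_sub h dvd_rfl
    · intro h
      have hn : n = (n - w) + w := by omega
      rw [hn]; exact dvd_add h dvd_rfl
  by_cases h0 : n = 0
  · subst h0
    rw [if_pos rfl, if_neg (by omega : ¬ w ≤ 0), if_neg (by omega : ¬ (0 : ℕ) = w)]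
    norm_num
  · rw [if_neg h0]
    by_cases hnw : n = w
    · subst hnw
      rw [if_pos dvd_rfl, if_pos le_rfl, if_pos (Nat.sub_self _), if_pos rfl]
      simp [h0]
      norm_num
    · rw [if_neg hnw]
      by_cases hle : w ≤ n
      · have hne : n - w ≠ 0 := by omega
        rw [if_pos hle, if_neg hne]
        by_cases hd : w ∣ n
        · rw [if_pos hd, if_pos ((hdv hle hne).mp hd)]; simp [h0]
        · rw [if_neg hd, if_neg (fun hh => hd ((hdv hle hne).mpr hh))]; simp [h0]
      · have hd : ¬ w ∣ n := fun hh => hle (Nat.le_of_dvd (by omega) hh)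
        rw [if_neg hd, if_neg hle]; simp [h0]

theorem stmt_10 (b c e f : ℕ) (hb : 0 < b) (hc : 0 < c) (he : 0 < e) (hf : 0 < f)
    (h : g (c + e) * g b * (g c + g e) = g f * (g b * g b + g c * g e)) :
    f = c + e ∧ (b = c ∨ b = e) := by
  have gub := gu b hb
  have guc := gu c hc
  have gue := gu e he
  have guf := gu f hf
  have guce := gu (c + e) (by omega)
  have H : (g (c + e) * (1 - (X : ℚ⟦X⟧) ^ (c + e))) * (g b * (1 - X ^ b)) *
        ((g c * (1 - X ^ c)) * (1 - X ^ e) + (g e * (1 - X ^ e)) * (1 - X ^ c)) *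
        ((1 - X ^ f) * (1 - X ^ b))
      = (g f * (1 - X ^ f)) *
        ((g b * (1 - X ^ b)) * (g b * (1 - X ^ b)) * ((1 - X ^ c) * (1 - X ^ e)) +
         (g c * (1 - X ^ c)) * (g e * (1 - X ^ e)) * ((1 - X ^ b) * (1 - X ^ b))) *
        (1 - X ^ (c + e)) := by
    linear_combination ((1 - (X:ℚ⟦X⟧)^b) * (1 - X^b) * (1 - X^c) * (1 - X^e) * (1 - X^f) *
      (1 - X^(c+e))) * h
  rw [guce, gub, guc, gue, guf] at H
  have hce : (X : ℚ⟦X⟧) ^ (c + e) = X ^ c * X ^ e := pow_add X c e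
  rw [hce] at H
  have hne : (1 - (X : ℚ⟦X⟧) ^ c * X ^ e) ≠ 0 := by
    intro h0
    have h1 := congrArg (PowerSeries.constantCoeff (R := ℚ)) h0
    rw [map_sub, map_one, map_mul, map_pow, map_pow, PowerSeries.constantCoeff_X,
      zero_pow hc.ne', zero_pow he.ne'] at h1
    norm_num at h1
  have H2 : ((2 : ℚ⟦X⟧) * (1 + X ^ c * X ^ e) * (1 + X ^ b) * ((1 - X ^ f) * (1 - X ^ b))) *
        (1 - X ^ c * X ^ e)
      = ((1 + X ^ f) *
        ((1 + X ^ b) * (1 + X ^ b) * ((1 - X ^ c) * (1 - X ^ e)) +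
         (1 + X ^ c) * (1 + X ^ e) * ((1 - X ^ b) * (1 - X ^ b)))) *
        (1 - X ^ c * X ^ e) := by
    linear_combination H
  have H3 := mul_right_cancel₀ hne H2
  have M : (PowerSeries.C (R := ℚ)) 4 * (X : ℚ⟦X⟧) ^ (b + c) + (PowerSeries.C (R := ℚ)) 4 * X ^ (b + e) +
        (PowerSeries.C (R := ℚ)) 4 * X ^ (b + c + f) + (PowerSeries.C (R := ℚ)) 4 * X ^ (b + e + f)
      = (PowerSeries.C (R := ℚ)) 4 * X ^ (b + b) + (PowerSeries.C (R := ℚ)) 4 * X ^ (b + b + (c + e)) +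
        (PowerSeries.C (R := ℚ)) 4 * X ^ f + (PowerSeries.C (R := ℚ)) 4 * X ^ (f + (c + e)) := by
    have h4 : (PowerSeries.C (R := ℚ)) 4 = (4 : ℚ⟦X⟧) := map_ofNat ((PowerSeries.C (R := ℚ))) 4
    rw [h4]
    simp only [pow_add]
    linear_combination H3
  have key : ∀ n : ℕ,
      4 * (if n = b + c then (1:ℚ) else 0) + 4 * (if n = b + e then 1 else 0) +
      4 * (if n = b + c + f then 1 else 0) + 4 * (if n = b + e + f then 1 else 0)
    = 4 * (if n = b + b then 1 else 0) + 4 * (if n = b + b + (c + e) then 1 else 0) +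
      4 * (if n = f then 1 else 0) + 4 * (if n = f + (c + e) then 1 else 0) := by
    intro n
    have hco := congrArg (PowerSeries.coeff (R := ℚ) n) M
    simpa only [map_add, PowerSeries.coeff_C_mul, PowerSeries.coeff_X_pow] using hco
  have mem1 : b + c = b + b ∨ b + c = b + b + (c + e) ∨ b + c = f ∨ b + c = f + (c + e) := by
    by_contra hK
    push_neg at hK
    have hco := key (b + c)
    simp only [hK.1, hK.2.1, hK.2.2.1, hK.2.2.2, eq_self_iff_true, if_true, if_false] at hco
    split_ifs at hco <;> norm_num at hco
  have mem2 : b + e = b + b ∨ b + e = b + b + (c + e) ∨ b + e = f ∨ b + e = f + (c + e) := by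
    by_contra hK
    push_neg at hK
    have hco := key (b + e)
    simp only [hK.1, hK.2.1, hK.2.2.1, hK.2.2.2, eq_self_iff_true, if_true, if_false] at hco
    split_ifs at hco <;> norm_num at hco
  have mem3 : b + c + f = b + b ∨ b + c + f = b + b + (c + e) ∨ b + c + f = f ∨
      b + c + f = f + (c + e) := by
    by_contra hK
    push_neg at hK
    have hco := key (b + c + f)
    simp only [hK.1, hK.2.1, hK.2.2.1, hK.2.2.2, eq_self_iff_true, if_true, if_false] at hco
    split_ifs at hco <;> norm_num at hco
  have mem4 : b + e + f = b + b ∨ b + e + f = b + b + (c + e) ∨ b + e + f = f ∨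
      b + e + f = f + (c + e) := by
    by_contra hK
    push_neg at hK
    have hco := key (b + e + f)
    simp only [hK.1, hK.2.1, hK.2.2.1, hK.2.2.2, eq_self_iff_true, if_true, if_false] at hco
    split_ifs at hco <;> norm_num at hco
  have mem5 : b + b = b + c ∨ b + b = b + e ∨ b + b = b + c + f ∨ b + b = b + e + f := by
    by_contra hK
    push_neg at hK
    have hco := key (b + b)
    simp only [hK.1, hK.2.1, hK.2.2.1, hK.2.2.2, eq_self_iff_true, if_true, if_false] at hco
    split_ifs at hco <;> norm_num at hco
  have mem6 : b + b + (c + e) = b + c ∨ b + b + (c + e) = b + e ∨ b + b + (c + e) = b + c + f ∨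
      b + b + (c + e) = b + e + f := by
    by_contra hK
    push_neg at hK
    have hco := key (b + b + (c + e))
    simp only [hK.1, hK.2.1, hK.2.2.1, hK.2.2.2, eq_self_iff_true, if_true, if_false] at hco
    split_ifs at hco <;> norm_num at hco
  have mem7 : f = b + c ∨ f = b + e ∨ f = b + c + f ∨ f = b + e + f := by
    by_contra hK
    push_neg at hK
    have hco := key f
    simp only [hK.1, hK.2.1, hK.2.2.1, hK.2.2.2, eq_self_iff_true, if_true, if_false] at hco
    split_ifs at hco <;> norm_num at hco
  have mem8 : f + (c + e) = b + c ∨ f + (c + e) = b + e ∨ f + (c + e) = b + c + f ∨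
      f + (c + e) = b + e + f := by
    by_contra hK
    push_neg at hK
    have hco := key (f + (c + e))
    simp only [hK.1, hK.2.1, hK.2.2.1, hK.2.2.2, eq_self_iff_true, if_true, if_false] at hco
    split_ifs at hco <;> norm_num at hco
  omega
end

section
/- Let b, c, d, f be positive integers. If g_{b+d}·g_c·(g_b + g_d) = g_f·(g_b·g_d + g_c·g_c) in ℚ⟦X⟧, then f = b + d and moreover c = b or c = d. -/
open PowerSeries
lemma g_key (w : ℕ) (hw : 0 < w) : g w * (1 - X ^ w) = (1 + X ^ w : PowerSeries ℚ) := by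
  ext n
  rw [mul_sub, mul_one, map_sub, map_add, coeff_mul_X_pow', coeff_one, coeff_X_pow, g, coeff_mk]
  rcases Nat.eq_zero_or_pos n with rfl | hn
  · have h1 : ¬ w ≤ 0 := by omega
    simp [h1, hw.ne', eq_comm]
  · simp only [hn.ne', if_false]
    rcases le_or_gt w n with hle | hlt
    · rw [if_pos hle, coeff_mk]
      rcases eq_or_ne n w with rfl | hnw
      · rw [if_pos rfl, if_pos (dvd_refl n), Nat.sub_self, if_pos rfl]
        norm_num
      · rw [if_neg hnw, if_neg (by omega : ¬ n - w = 0)]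
        by_cases hdvd : w ∣ n
        · rw [if_pos hdvd, if_pos (Nat.dvd_sub hdvd dvd_rfl)]
          ring
        · rw [if_neg hdvd, if_neg (fun hc : w ∣ n - w => hdvd (by
            have h2 := Nat.dvd_add hc (dvd_refl w)
            rwa [Nat.sub_add_cancel hle] at h2))]
          ring
    · rw [if_neg (by omega : ¬ w ≤ n), if_neg (by omega : ¬ n = w),
        if_neg (fun hd : w ∣ n => by have := Nat.le_of_dvd hn hd; omega)]
      ring

lemma ind_nonneg (p : Prop) [Decidable p] : (0:ℚ) ≤ if p then 1 else 0 := by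
  split <;> norm_num

lemma ind_mem (p1 p2 p3 p4 : Prop) [Decidable p1] [Decidable p2] [Decidable p3] [Decidable p4]
    (h : 0 < (if p1 then (1:ℚ) else 0) + (if p2 then 1 else 0) + (if p3 then 1 else 0)
      + (if p4 then 1 else 0)) : p1 ∨ p2 ∨ p3 ∨ p4 := by
  by_contra hcon
  push_neg at hcon
  obtain ⟨h1, h2, h3, h4⟩ := hcon
  rw [if_neg h1, if_neg h2, if_neg h3, if_neg h4] at h
  norm_num at h

theorem stmt_12 (b c d f : ℕ) (hb : 0 < b) (hc : 0 < c) (hd : 0 < d) (hf : 0 < f)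
    (h : g (b + d) * g c * (g b + g d) = g f * (g b * g d + g c * g c)) :
    f = b + d ∧ (c = b ∨ c = d) := by
  have kb := g_key b hb
  have kd := g_key d hd
  have kc := g_key c hc
  have kf := g_key f hf
  have kB := g_key (b+d) (by omega)
  set P : PowerSeries ℚ := (1 - X^(b+d)) * (1 - X^c) * (1 - X^c) * (1 - X^b) * (1 - X^d) * (1 - X^f) with hP
  have L : g (b+d) * g c * (g b + g d) * P
      = (1 + (X:PowerSeries ℚ)^(b+d)) * (1 + (X:PowerSeries ℚ)^c) * ((1 + (X:PowerSeries ℚ)^b)*(1 - (X:PowerSeries ℚ)^d) + (1 + (X:PowerSeries ℚ)^d)*(1 - (X:PowerSeries ℚ)^b)) * ((1 - (X:PowerSeries ℚ)^c)*(1 - (X:PowerSeries ℚ)^f)) := by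
    rw [hP]
    linear_combination (g c * (1-(X:PowerSeries ℚ)^c) * (g b * (1-(X:PowerSeries ℚ)^b)*(1-(X:PowerSeries ℚ)^d) + g d * (1-(X:PowerSeries ℚ)^d)*(1-(X:PowerSeries ℚ)^b)) * ((1-(X:PowerSeries ℚ)^c)*(1-(X:PowerSeries ℚ)^f))) * kB
      + ((1+(X:PowerSeries ℚ)^(b+d)) * (g b * (1-(X:PowerSeries ℚ)^b)*(1-(X:PowerSeries ℚ)^d) + g d * (1-(X:PowerSeries ℚ)^d)*(1-(X:PowerSeries ℚ)^b)) * ((1-(X:PowerSeries ℚ)^c)*(1-(X:PowerSeries ℚ)^f))) * kc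
      + ((1+(X:PowerSeries ℚ)^(b+d)) * (1+(X:PowerSeries ℚ)^c) * (1-(X:PowerSeries ℚ)^d) * ((1-(X:PowerSeries ℚ)^c)*(1-(X:PowerSeries ℚ)^f))) * kb
      + ((1+(X:PowerSeries ℚ)^(b+d)) * (1+(X:PowerSeries ℚ)^c) * (1-(X:PowerSeries ℚ)^b) * ((1-(X:PowerSeries ℚ)^c)*(1-(X:PowerSeries ℚ)^f))) * kd
  have R : g f * (g b * g d + g c * g c) * P
      = (1 + (X:PowerSeries ℚ)^f) * ((1 + (X:PowerSeries ℚ)^b)*(1 + (X:PowerSeries ℚ)^d)*((1 - (X:PowerSeries ℚ)^c)*(1 - (X:PowerSeries ℚ)^c)) + (1 + (X:PowerSeries ℚ)^c)*(1 + (X:PowerSeries ℚ)^c)*((1 - (X:PowerSeries ℚ)^b)*(1 - (X:PowerSeries ℚ)^d))) * (1 - (X:PowerSeries ℚ)^(b+d)) := by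
    rw [hP]
    linear_combination ((g b * g d + g c * g c) * (1-(X:PowerSeries ℚ)^b)*(1-(X:PowerSeries ℚ)^d)*(1-(X:PowerSeries ℚ)^c)*(1-(X:PowerSeries ℚ)^c)*(1-(X:PowerSeries ℚ)^(b+d))) * kf
      + ((1+(X:PowerSeries ℚ)^f) * (g d * (1-(X:PowerSeries ℚ)^d)) * ((1-(X:PowerSeries ℚ)^c)*(1-(X:PowerSeries ℚ)^c)) * (1-(X:PowerSeries ℚ)^(b+d))) * kb
      + ((1+(X:PowerSeries ℚ)^f) * (1+(X:PowerSeries ℚ)^b) * ((1-(X:PowerSeries ℚ)^c)*(1-(X:PowerSeries ℚ)^c)) * (1-(X:PowerSeries ℚ)^(b+d))) * kd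
      + ((1+(X:PowerSeries ℚ)^f) * (g c * (1-(X:PowerSeries ℚ)^c) + (1+(X:PowerSeries ℚ)^c)) * ((1-(X:PowerSeries ℚ)^b)*(1-(X:PowerSeries ℚ)^d)) * (1-(X:PowerSeries ℚ)^(b+d))) * kc
  have E : (1 + (X:PowerSeries ℚ)^(b+d)) * (1 + (X:PowerSeries ℚ)^c) * ((1 + (X:PowerSeries ℚ)^b)*(1 - (X:PowerSeries ℚ)^d) + (1 + (X:PowerSeries ℚ)^d)*(1 - (X:PowerSeries ℚ)^b)) * ((1 - (X:PowerSeries ℚ)^c)*(1 - (X:PowerSeries ℚ)^f))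
      = (1 + (X:PowerSeries ℚ)^f) * ((1 + (X:PowerSeries ℚ)^b)*(1 + (X:PowerSeries ℚ)^d)*((1 - (X:PowerSeries ℚ)^c)*(1 - (X:PowerSeries ℚ)^c)) + (1 + (X:PowerSeries ℚ)^c)*(1 + (X:PowerSeries ℚ)^c)*((1 - (X:PowerSeries ℚ)^b)*(1 - (X:PowerSeries ℚ)^d))) * (1 - (X:PowerSeries ℚ)^(b+d)) := by
    rw [← L, ← R, h]
  have hne : (1 - (X:PowerSeries ℚ)^(b+d)) ≠ 0 := by
    intro h0
    have := congrArg (constantCoeff) h0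
    simp [zero_pow (by omega : b + d ≠ 0)] at this
  have h4 : (4 : ℚ⟦X⟧) ≠ 0 := by
    intro h0
    have := congrArg (constantCoeff) h0
    rw [map_ofNat] at this
    norm_num at this
  have star' : ((1 - (X:PowerSeries ℚ)^(b+d)) * 4) * ((1 + (X:PowerSeries ℚ)^(b+d)) * ((X:PowerSeries ℚ)^f + (X:PowerSeries ℚ)^(2*c)))
      = ((1 - (X:PowerSeries ℚ)^(b+d)) * 4) * ((1 + (X:PowerSeries ℚ)^f) * ((X:PowerSeries ℚ)^(b+c) + (X:PowerSeries ℚ)^(c+d))) := by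
    linear_combination (-1 : ℚ⟦X⟧) * E
  have star := mul_left_cancel₀ (mul_ne_zero hne h4) star'
  have star2 : ((X:PowerSeries ℚ)^f + (X:PowerSeries ℚ)^(2*c) + (X:PowerSeries ℚ)^(f+(b+d)) + (X:PowerSeries ℚ)^(2*c+(b+d)))
      = (X:PowerSeries ℚ)^(b+c) + (X:PowerSeries ℚ)^(c+d) + (X:PowerSeries ℚ)^(f+(b+c)) + (X:PowerSeries ℚ)^(f+(c+d)) := by
    linear_combination star
  have C : ∀ n : ℕ, ((if n = f then 1 else 0) + (if n = 2*c then 1 else 0)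
        + (if n = f+(b+d) then 1 else 0) + (if n = 2*c+(b+d) then 1 else 0) : ℚ)
      = (if n = b+c then 1 else 0) + (if n = c+d then 1 else 0)
        + (if n = f+(b+c) then 1 else 0) + (if n = f+(c+d) then 1 else 0) := by
    intro n
    have := congrArg (coeff n) star2
    simpa [coeff_X_pow] using this
  have m1 : f = b+c ∨ f = c+d ∨ f = f+(b+c) ∨ f = f+(c+d) := by
    apply ind_mem
    have hC := C f
    rw [if_pos rfl] at hC
    rw [← hC]
    linarith [ind_nonneg (f = 2*c), ind_nonneg (f = f+(b+d)), ind_nonneg (f = 2*c+(b+d))]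
  have m2 : 2*c = b+c ∨ 2*c = c+d ∨ 2*c = f+(b+c) ∨ 2*c = f+(c+d) := by
    apply ind_mem
    have hC := C (2*c)
    rw [if_pos rfl] at hC
    rw [← hC]
    linarith [ind_nonneg (2*c = f), ind_nonneg (2*c = f+(b+d)), ind_nonneg (2*c = 2*c+(b+d))]
  have m3 : f+(b+d) = b+c ∨ f+(b+d) = c+d ∨ f+(b+d) = f+(b+c) ∨ f+(b+d) = f+(c+d) := by
    apply ind_mem
    have hC := C (f+(b+d))
    rw [if_pos rfl] at hC
    rw [← hC]
    linarith [ind_nonneg (f+(b+d) = f), ind_nonneg (f+(b+d) = 2*c), ind_nonneg (f+(b+d) = 2*c+(b+d))]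
  have m4 : 2*c+(b+d) = b+c ∨ 2*c+(b+d) = c+d ∨ 2*c+(b+d) = f+(b+c) ∨ 2*c+(b+d) = f+(c+d) := by
    apply ind_mem
    have hC := C (2*c+(b+d))
    rw [if_pos rfl] at hC
    rw [← hC]
    linarith [ind_nonneg (2*c+(b+d) = f), ind_nonneg (2*c+(b+d) = 2*c), ind_nonneg (2*c+(b+d) = f+(b+d))]
  have m5 : b+c = f ∨ b+c = 2*c ∨ b+c = f+(b+d) ∨ b+c = 2*c+(b+d) := by
    apply ind_mem
    have hC := C (b+c)
    rw [if_pos rfl] at hC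
    rw [hC]
    linarith [ind_nonneg (b+c = c+d), ind_nonneg (b+c = f+(b+c)), ind_nonneg (b+c = f+(c+d))]
  have m6 : c+d = f ∨ c+d = 2*c ∨ c+d = f+(b+d) ∨ c+d = 2*c+(b+d) := by
    apply ind_mem
    have hC := C (c+d)
    rw [if_pos rfl] at hC
    rw [hC]
    linarith [ind_nonneg (c+d = b+c), ind_nonneg (c+d = f+(b+c)), ind_nonneg (c+d = f+(c+d))]
  have m7 : f+(b+c) = f ∨ f+(b+c) = 2*c ∨ f+(b+c) = f+(b+d) ∨ f+(b+c) = 2*c+(b+d) := by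
    apply ind_mem
    have hC := C (f+(b+c))
    rw [if_pos rfl] at hC
    rw [hC]
    linarith [ind_nonneg (f+(b+c) = b+c), ind_nonneg (f+(b+c) = c+d), ind_nonneg (f+(b+c) = f+(c+d))]
  have m8 : f+(c+d) = f ∨ f+(c+d) = 2*c ∨ f+(c+d) = f+(b+d) ∨ f+(c+d) = 2*c+(b+d) := by
    apply ind_mem
    have hC := C (f+(c+d))
    rw [if_pos rfl] at hC
    rw [hC]
    linarith [ind_nonneg (f+(c+d) = b+c), ind_nonneg (f+(c+d) = c+d), ind_nonneg (f+(c+d) = f+(b+c))]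
  omega
end
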